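/- Let F_q be a finite field, m ≥ 2, and 0 ≤ ℓ < q−1. Every subset T ⊆ (F_q^*)^m with |T| = ℓ(q−1)^{m−1} + 1 contains an m-dimensional ℓ-th order simplicial configuration. -/

import Mathlib

/-- Simplicial configuration, as in the paper (dimension is `m + 1`). -/
def IsSimplicialConfig (F : Type*) [DecidableEq F] :
    (m : ℕ) → (l : ℕ) → Finset (Fin (m + 1) → F) → Prop
  | 0, l, S => S.card = l + 1
  | m + 1, l, S =>
      S.card = Nat.choose (m + 2 + l) l ∧
      ∃ a : Fin (l + 1) → F, Function.Injective a ∧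
        (∀ p ∈ S, ∃ j, p (Fin.last (m + 1)) = a j) ∧
        ∀ j : Fin (l + 1),
          (S.filter fun p => p (Fin.last (m + 1)) = a j).card
            = Nat.choose (m + 1 + (j : ℕ)) (j : ℕ) ∧
          IsSimplicialConfig F m (j : ℕ)
            ((S.filter fun p => p (Fin.last (m + 1)) = a j).image fun p => p ∘ Fin.castSucc)

open Finset

lemma config_card_aux {F : Type*} [DecidableEq F] :
    ∀ (m l : ℕ) (S : Finset (Fin (m + 1) → F)),
      IsSimplicialConfig F m l S → S.card = Nat.choose (m + 1 + l) l
  | 0, l, S, h => by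
      simp only [IsSimplicialConfig] at h
      simpa [Nat.add_comm, Nat.choose_succ_self_right] using h
  | m + 1, l, S, h => h.1

lemma hockey_aux (m : ℕ) : ∀ l : ℕ,
    ∑ j ∈ Finset.range (l + 1), Nat.choose (m + 1 + j) j = Nat.choose (m + 2 + l) l := by
  intro l
  induction l with
  | zero => simp
  | succ l ih =>
      rw [Finset.sum_range_succ, ih]
      have h1 : m + 1 + (l + 1) = m + 2 + l := by omega
      have h2 : m + 2 + (l + 1) = (m + 2 + l) + 1 := by omega
      rw [h1, h2, Nat.choose_succ_succ]

lemma exists_sdr_aux {α : Type*} [DecidableEq α] :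
    ∀ (n : ℕ) (A : ℕ → Finset α), (∀ k, A (k + 1) ⊆ A k) →
      (∀ k, n + 1 - k ≤ (A k).card) →
      ∃ b : Fin (n + 1) → α, Function.Injective b ∧ ∀ k : Fin (n + 1), b k ∈ A (k : ℕ) := by
  intro n
  induction n with
  | zero =>
      intro A _ hcard
      have h0 : 1 ≤ (A 0).card := by simpa using hcard 0
      obtain ⟨x, hx⟩ := Finset.card_pos.mp h0
      refine ⟨fun _ => x, fun a c _ => by omega, fun k => ?_⟩
      have : (k : ℕ) = 0 := by omega
      rw [this]; exact hx
  | succ n IH =>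
      intro A hmono hcard
      obtain ⟨b', hb'inj, hb'mem⟩ := IH (fun k => A (k + 1)) (fun k => hmono (k + 1))
        (fun k => by show n + 1 - k ≤ (A (k + 1)).card; have := hcard (k + 1); omega)
      have himg : (Finset.univ.image b').card ≤ n + 1 := by
        calc (Finset.univ.image b').card ≤ (Finset.univ : Finset (Fin (n + 1))).card :=
              Finset.card_image_le
        _ = n + 1 := by simp
      have h0 : n + 2 ≤ (A 0).card := by have := hcard 0; omega
      have hdiff : (A 0 \ Finset.univ.image b').Nonempty := by
        rw [← Finset.card_pos]
        have := Finset.le_card_sdiff (Finset.univ.image b') (A 0)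
        omega
      obtain ⟨x, hx⟩ := hdiff
      rw [Finset.mem_sdiff] at hx
      refine ⟨Fin.cons x b', ?_, ?_⟩
      · rw [Fin.cons_injective_iff]
        refine ⟨?_, hb'inj⟩
        rintro ⟨i, rfl⟩
        exact hx.2 (Finset.mem_image_of_mem b' (Finset.mem_univ i))
      · intro k
        refine Fin.cases ?_ ?_ k
        · simpa using hx.1
        · intro i
          simpa using hb'mem i

lemma main_lemma_aux {F : Type*} [Field F] [Fintype F] [DecidableEq F] (q : ℕ)
    (hq : Fintype.card F = q) :
    ∀ (m l : ℕ), l < q - 1 → ∀ T : Finset (Fin (m + 1) → Fˣ),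
      T.card = l * (q - 1) ^ m + 1 → ∃ S ⊆ T, IsSimplicialConfig Fˣ m l S := by
  intro m
  induction m with
  | zero =>
      intro l hl T hT
      exact ⟨T, Finset.Subset.refl T, by simpa [IsSimplicialConfig] using hT⟩
  | succ m IH =>
      intro l hl T hT
      set Q := q - 1 with hQ
      have hcard_units : Fintype.card Fˣ = Q := by rw [Fintype.card_units, hq]
      set fib : Fˣ → Finset (Fin (m + 2) → Fˣ) :=
        fun b => T.filter fun p => p (Fin.last (m + 1)) = b with hfib
      set proj : (Fin (m + 2) → Fˣ) → (Fin (m + 1) → Fˣ) :=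
        fun p => p ∘ Fin.castSucc with hproj
      have hprojinj : ∀ b : Fˣ, Set.InjOn proj (fib b : Set (Fin (m + 2) → Fˣ)) := by
        intro b p hp p' hp' hpp
        simp only [hfib, Finset.coe_filter, Set.mem_setOf_eq] at hp hp'
        funext i
        refine Fin.lastCases ?_ ?_ i
        · rw [hp.2, hp'.2]
        · intro i; exact congrFun hpp i
      have hfib_le : ∀ b, (fib b).card ≤ Q ^ (m + 1) := by
        intro b
        have h := Finset.card_le_card_of_injOn proj
          (fun p _ => Finset.mem_univ (proj p)) (hprojinj b)
        simpa [Fintype.card_fun, hcard_units] using h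
      have hsum : ∑ b : Fˣ, (fib b).card = T.card :=
        (Finset.card_eq_sum_card_fiberwise (fun x _ => Finset.mem_univ _)).symm
      set A : ℕ → Finset Fˣ :=
        fun k => Finset.univ.filter fun b => k * Q ^ m + 1 ≤ (fib b).card with hA
      have hAmono : ∀ k, A (k + 1) ⊆ A k := by
        intro k b hb
        simp only [hA, Finset.mem_filter, Finset.mem_univ, true_and] at hb ⊢
        have : k * Q ^ m ≤ (k + 1) * Q ^ m := Nat.mul_le_mul_right _ (by omega)
        omega
      have hAcard : ∀ k, l + 1 - k ≤ (A k).card := by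
        intro k
        rcases le_or_gt k l with hk | hk
        · by_contra hcon
          push_neg at hcon
          have hak : (A k).card + k ≤ l := by omega
          set a := (A k).card with ha
          set c := (Finset.univ.filter fun b : Fˣ => ¬ (k * Q ^ m + 1 ≤ (fib b).card)).card with hc
          have hac : a + c = Q := by
            have := Finset.card_filter_add_card_filter_not
              (s := (Finset.univ : Finset Fˣ)) (fun b => k * Q ^ m + 1 ≤ (fib b).card)
            rw [Finset.card_univ, hcard_units] at this
            exact this
          have h1 : ∑ b ∈ A k, (fib b).card ≤ a * Q ^ (m + 1) := by
            have := Finset.sum_le_card_nsmul (A k) (fun b => (fib b).card) (Q ^ (m + 1))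
              (fun b _ => hfib_le b)
            simp only [smul_eq_mul] at this
            exact this
          have h2 : ∑ b ∈ Finset.univ.filter (fun b : Fˣ => ¬ (k * Q ^ m + 1 ≤ (fib b).card)),
              (fib b).card ≤ c * (k * Q ^ m) := by
            have := Finset.sum_le_card_nsmul
              (Finset.univ.filter fun b : Fˣ => ¬ (k * Q ^ m + 1 ≤ (fib b).card))
              (fun b => (fib b).card) (k * Q ^ m)
              (fun b hb => by
                simp only [Finset.mem_filter] at hb
                show (fib b).card ≤ k * Q ^ m
                omega)
            simp only [smul_eq_mul] at this
            exact this
          have hsplit := Finset.sum_filter_add_sum_filter_not Finset.univ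
            (fun b : Fˣ => k * Q ^ m + 1 ≤ (fib b).card) (fun b => (fib b).card)
          have htot : l * Q ^ (m + 1) + 1 ≤ a * Q ^ (m + 1) + c * (k * Q ^ m) := by
            have : T.card ≤ a * Q ^ (m + 1) + c * (k * Q ^ m) := by
              rw [← hsum, ← hsplit]; exact Nat.add_le_add h1 h2
            omega
          have key : a * Q + c * k ≤ l * Q := by nlinarith [hac, hak]
          have heq : a * Q ^ (m + 1) + c * (k * Q ^ m) = (a * Q + c * k) * Q ^ m := by ring
          have hle : (a * Q + c * k) * Q ^ m ≤ l * Q * Q ^ m := Nat.mul_le_mul_right _ key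
          have heq2 : l * Q * Q ^ m = l * Q ^ (m + 1) := by ring
          omega
        · omega
      obtain ⟨b, hbinj, hbmem⟩ := exists_sdr_aux l A hAmono hAcard
      have hbfib : ∀ j : Fin (l + 1), (j : ℕ) * Q ^ m + 1 ≤ (fib (b j)).card := by
        intro j
        have := hbmem j
        simpa [hA] using this
      have hstep : ∀ j : Fin (l + 1), ∃ Sj : Finset (Fin (m + 2) → Fˣ),
          Sj ⊆ T ∧ (∀ p ∈ Sj, p (Fin.last (m + 1)) = b j) ∧
          Sj.card = Nat.choose (m + 1 + (j : ℕ)) (j : ℕ) ∧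
          IsSimplicialConfig Fˣ m (j : ℕ) (Sj.image proj) := by
        intro j
        obtain ⟨Tj, hTjsub, hTjcard⟩ := Finset.exists_subset_card_eq (hbfib j)
        have hTjfib : ∀ p ∈ Tj, p ∈ fib (b j) := fun p hp => hTjsub hp
        have hinjTj : Set.InjOn proj (Tj : Set (Fin (m + 2) → Fˣ)) :=
          (hprojinj (b j)).mono hTjsub
        have himgcard : (Tj.image proj).card = (j : ℕ) * Q ^ m + 1 := by
          rw [Finset.card_image_of_injOn hinjTj, hTjcard]
        have hjlt : (j : ℕ) < q - 1 := lt_of_le_of_lt (by omega) hl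
        obtain ⟨S', hS'sub, hS'conf⟩ := IH (j : ℕ) hjlt (Tj.image proj) himgcard
        set Sj := Tj.filter (fun p => proj p ∈ S') with hSj
        have hSjTj : Sj ⊆ Tj := Finset.filter_subset _ _
        have himg : Sj.image proj = S' := by
          ext x
          simp only [hSj, Finset.mem_image, Finset.mem_filter]
          constructor
          · rintro ⟨p, ⟨_, hx⟩, rfl⟩; exact hx
          · intro hx
            obtain ⟨p, hpTj, rfl⟩ := Finset.mem_image.mp (hS'sub hx)
            exact ⟨p, ⟨hpTj, hx⟩, rfl⟩
        have hSjcard : Sj.card = Nat.choose (m + 1 + (j : ℕ)) (j : ℕ) := by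
          have h1 : (Sj.image proj).card = Sj.card :=
            Finset.card_image_of_injOn (hinjTj.mono hSjTj)
          have h2 := config_card_aux m (j : ℕ) S' hS'conf
          rw [← h1, himg, h2]
        refine ⟨Sj, ?_, ?_, hSjcard, ?_⟩
        · intro p hp
          have := hTjsub (hSjTj hp)
          simp only [hfib, Finset.mem_filter] at this
          exact this.1
        · intro p hp
          have := hTjsub (hSjTj hp)
          simp only [hfib, Finset.mem_filter] at this
          exact this.2
        · rw [himg]; exact hS'conf
      choose Sf hsub hlast hcard hconf using hstep
      set S : Finset (Fin (m + 2) → Fˣ) := Finset.univ.biUnion Sf with hS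
      have hdisj : ∀ i ∈ (Finset.univ : Finset (Fin (l + 1))), ∀ j ∈ Finset.univ,
          i ≠ j → Disjoint (Sf i) (Sf j) := by
        intro i _ j _ hij
        rw [Finset.disjoint_left]
        intro p hpi hpj
        exact hij (hbinj ((hlast i p hpi).symm.trans (hlast j p hpj)))
      have hfilter : ∀ j : Fin (l + 1),
          S.filter (fun p => p (Fin.last (m + 1)) = b j) = Sf j := by
        intro j
        ext p
        simp only [hS, Finset.mem_filter, Finset.mem_biUnion, Finset.mem_univ, true_and]
        constructor
        · rintro ⟨⟨i, hpi⟩, hpl⟩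
          have hbi : b i = b j := by rw [← hlast i p hpi, hpl]
          rwa [hbinj hbi] at hpi
        · intro hp; exact ⟨⟨j, hp⟩, hlast j p hp⟩
      refine ⟨S, ?_, ?_, b, hbinj, ?_, ?_⟩
      · intro p hp
        simp only [hS, Finset.mem_biUnion, Finset.mem_univ, true_and] at hp
        obtain ⟨j, hpj⟩ := hp
        exact hsub j hpj
      · -- card of S
        rw [hS, Finset.card_biUnion hdisj]
        calc ∑ j : Fin (l + 1), (Sf j).card
            = ∑ j : Fin (l + 1), Nat.choose (m + 1 + (j : ℕ)) (j : ℕ) := by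
              exact Finset.sum_congr rfl (fun j _ => hcard j)
          _ = ∑ j ∈ Finset.range (l + 1), Nat.choose (m + 1 + j) j :=
              Fin.sum_univ_eq_sum_range (fun j => Nat.choose (m + 1 + j) j) (l + 1)
          _ = Nat.choose (m + 2 + l) l := hockey_aux m l
      · intro p hp
        simp only [hS, Finset.mem_biUnion, Finset.mem_univ, true_and] at hp
        obtain ⟨j, hpj⟩ := hp
        exact ⟨j, hlast j p hpj⟩
      · intro j
        rw [hfilter j]
        exact ⟨hcard j, hconf j⟩

theorem contains_simplicial_configuration {F : Type*} [Field F] [Fintype F] [DecidableEq F]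
    (q m l : ℕ) (hq : Fintype.card F = q) (hl : l < q - 1)
    (T : Finset (Fin (m + 2) → Fˣ)) (hT : T.card = l * (q - 1) ^ (m + 1) + 1) :
    ∃ S ⊆ T, IsSimplicialConfig Fˣ (m + 1) l S :=
  main_lemma_aux q hq (m + 1) l hl T hT
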